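/- For any convex body K in ℝⁿ, ω_K = inf_{O ∈ ℝⁿ} e_K(O) = liminf_{|O| → ∞} e_K(O), where ω_K is the thickness of K. -/

import Mathlib

open scoped RealInnerProductSpace
open Metric Filter

/-- Width of `K` in direction `u`: distance between the two supporting
hyperplanes of `K` orthogonal to the unit vector `u`. -/
noncomputable def widthFn {n : ℕ} (K : Set (EuclideanSpace ℝ (Fin n)))
    (u : EuclideanSpace ℝ (Fin n)) : ℝ :=
  sSup ((fun x => ⟪x, u⟫) '' K) - sInf ((fun x => ⟪x, u⟫) '' K)

/-- Diameter of `K` in direction `u`: maximal length of a chord of `K` parallel to `u`. -/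
noncomputable def dirDiam {n : ℕ} (K : Set (EuclideanSpace ℝ (Fin n)))
    (u : EuclideanSpace ℝ (Fin n)) : ℝ :=
  sSup {d : ℝ | ∃ x ∈ K, ∃ y ∈ K, (∃ t : ℝ, x - y = t • u) ∧ d = dist x y}

/-- Projective spherical distance `ρ(u,v) = arccos |⟨u,v⟩|`. -/
noncomputable def rho {n : ℕ} (u v : EuclideanSpace ℝ (Fin n)) : ℝ :=
  Real.arccos |⟪u, v⟫|

/-- `e_K(O)`: maximal length of a chord of `K` cut by a line through `O`. -/
noncomputable def eFn {n : ℕ} (K : Set (EuclideanSpace ℝ (Fin n)))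
    (O : EuclideanSpace ℝ (Fin n)) : ℝ :=
  sSup {d : ℝ | ∃ x ∈ K, ∃ y ∈ K, Collinear ℝ ({O, x, y} : Set (EuclideanSpace ℝ (Fin n))) ∧
    d = dist x y}

/-- `s_K(u)`: maximal distance between a point of `K` in one supporting hyperplane
orthogonal to `u` and a point of `K` in the other. -/
noncomputable def sFn {n : ℕ} (K : Set (EuclideanSpace ℝ (Fin n)))
    (u : EuclideanSpace ℝ (Fin n)) : ℝ :=
  sSup {d : ℝ | ∃ A ∈ K, ∃ B ∈ K,
    (∀ x ∈ K, ⟪x, u⟫ ≤ ⟪A, u⟫) ∧ (∀ x ∈ K, ⟪B, u⟫ ≤ ⟪x, u⟫) ∧ d = dist A B}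

/-- `r_K(u)`: infimum over diametral chords `[AB]` for `u` and pairs of parallel
supporting hyperplanes `H₁ ∋ A`, `H₂ ∋ B` of the distance between `H₁` and `H₂`. -/
noncomputable def rFn {n : ℕ} (K : Set (EuclideanSpace ℝ (Fin n)))
    (u : EuclideanSpace ℝ (Fin n)) : ℝ :=
  sInf {d : ℝ | ∃ A ∈ K, ∃ B ∈ K, (∃ t : ℝ, A - B = t • u) ∧ dist A B = dirDiam K u ∧
    ∃ v : EuclideanSpace ℝ (Fin n), ‖v‖ = 1 ∧
      (∀ x ∈ K, ⟪x, v⟫ ≤ ⟪A, v⟫) ∧ (∀ x ∈ K, ⟪B, v⟫ ≤ ⟪x, v⟫) ∧ d = ⟪A - B, v⟫}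

namespace ThicknessAux

variable {n : ℕ}

lemma inner_cont (u : EuclideanSpace ℝ (Fin n)) :
    Continuous fun x : EuclideanSpace ℝ (Fin n) => ⟪x, u⟫ :=
  continuous_id.inner continuous_const

lemma bddAbove_img {K : Set (EuclideanSpace ℝ (Fin n))} (hKc : IsCompact K)
    (u : EuclideanSpace ℝ (Fin n)) : BddAbove ((fun x => ⟪x, u⟫) '' K) :=
  (hKc.image (inner_cont u)).bddAbove

lemma bddBelow_img {K : Set (EuclideanSpace ℝ (Fin n))} (hKc : IsCompact K)
    (u : EuclideanSpace ℝ (Fin n)) : BddBelow ((fun x => ⟪x, u⟫) '' K) :=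
  (hKc.image (inner_cont u)).bddBelow

lemma widthFn_nonneg {K : Set (EuclideanSpace ℝ (Fin n))} (hKc : IsCompact K)
    (hne : K.Nonempty) (u : EuclideanSpace ℝ (Fin n)) : 0 ≤ widthFn K u :=
  sub_nonneg.2 (csInf_le_csSup (hne.image _) (bddBelow_img hKc u) (bddAbove_img hKc u))

lemma inner_sub_le_width {K : Set (EuclideanSpace ℝ (Fin n))} (hKc : IsCompact K)
    {x y : EuclideanSpace ℝ (Fin n)} (hx : x ∈ K) (hy : y ∈ K)
    (u : EuclideanSpace ℝ (Fin n)) : ⟪y, u⟫ - ⟪x, u⟫ ≤ widthFn K u :=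
  sub_le_sub (le_csSup (bddAbove_img hKc u) ⟨y, hy, rfl⟩)
    (csInf_le (bddBelow_img hKc u) ⟨x, hx, rfl⟩)

lemma abs_inner_sub_le_width {K : Set (EuclideanSpace ℝ (Fin n))} (hKc : IsCompact K)
    {x y : EuclideanSpace ℝ (Fin n)} (hx : x ∈ K) (hy : y ∈ K)
    (u : EuclideanSpace ℝ (Fin n)) : |⟪y - x, u⟫| ≤ widthFn K u := by
  rw [inner_sub_left, abs_le]
  constructor
  · have := inner_sub_le_width hKc hy hx u; linarith
  · exact inner_sub_le_width hKc hx hy u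

lemma widthFn_eq_of_support {K : Set (EuclideanSpace ℝ (Fin n))} (hKc : IsCompact K)
    {u x z : EuclideanSpace ℝ (Fin n)} (hx : x ∈ K) (hz : z ∈ K)
    (hmax : ∀ k ∈ K, ⟪k, u⟫ ≤ ⟪z, u⟫) (hmin : ∀ k ∈ K, ⟪x, u⟫ ≤ ⟪k, u⟫) :
    widthFn K u = ⟪z, u⟫ - ⟪x, u⟫ := by
  have hg : IsGreatest ((fun x => ⟪x, u⟫) '' K) ⟪z, u⟫ :=
    ⟨⟨z, hz, rfl⟩, by rintro _ ⟨k, hk, rfl⟩; exact hmax k hk⟩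
  have hl : IsLeast ((fun x => ⟪x, u⟫) '' K) ⟪x, u⟫ :=
    ⟨⟨x, hx, rfl⟩, by rintro _ ⟨k, hk, rfl⟩; exact hmin k hk⟩
  unfold widthFn
  rw [hg.csSup_eq, hl.csInf_eq]

lemma collinear_self_pair (O k : EuclideanSpace ℝ (Fin n)) :
    Collinear ℝ ({O, k, k} : Set (EuclideanSpace ℝ (Fin n))) := by
  have h : ({O, k, k} : Set (EuclideanSpace ℝ (Fin n))) = {O, k} := by
    simp
  rw [h]
  exact collinear_pair ℝ O k

lemma le_eFn {K : Set (EuclideanSpace ℝ (Fin n))} (hKc : IsCompact K)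
    {O x y : EuclideanSpace ℝ (Fin n)} (hx : x ∈ K) (hy : y ∈ K)
    (hcol : Collinear ℝ ({O, x, y} : Set (EuclideanSpace ℝ (Fin n)))) :
    dist x y ≤ eFn K O := by
  apply le_csSup
  · refine ⟨Metric.diam K, ?_⟩
    rintro d ⟨a, ha, b, hb, -, rfl⟩
    exact Metric.dist_le_diam_of_mem hKc.isBounded ha hb
  · exact ⟨x, hx, y, hy, hcol, rfl⟩

lemma eFn_nonneg {K : Set (EuclideanSpace ℝ (Fin n))} (hKc : IsCompact K)
    (hne : K.Nonempty) (O : EuclideanSpace ℝ (Fin n)) : 0 ≤ eFn K O := by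
  obtain ⟨k, hk⟩ := hne
  have := le_eFn hKc hk hk (collinear_self_pair O k)
  rwa [dist_self] at this

lemma eFn_le_diam {K : Set (EuclideanSpace ℝ (Fin n))} (hKc : IsCompact K)
    (hne : K.Nonempty) (O : EuclideanSpace ℝ (Fin n)) : eFn K O ≤ Metric.diam K := by
  obtain ⟨k, hk⟩ := hne
  have hne2 : {d : ℝ | ∃ x ∈ K, ∃ y ∈ K,
      Collinear ℝ ({O, x, y} : Set (EuclideanSpace ℝ (Fin n))) ∧ d = dist x y}.Nonempty :=
    ⟨0, k, hk, k, hk, collinear_self_pair O k, (dist_self k).symm⟩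
  refine csSup_le hne2 ?_
  rintro d ⟨a, ha, b, hb, -, rfl⟩
  exact Metric.dist_le_diam_of_mem hKc.isBounded ha hb

lemma exists_unit_dual {f : EuclideanSpace ℝ (Fin n) →L[ℝ] ℝ} (hf : f ≠ 0) :
    ∃ (u : EuclideanSpace ℝ (Fin n)) (c : ℝ), ‖u‖ = 1 ∧ 0 < c ∧
      ∀ w, ⟪w, u⟫ = c * f w := by
  set v := (InnerProductSpace.toDual ℝ (EuclideanSpace ℝ (Fin n))).symm f with hv
  have hv0 : v ≠ 0 := by
    intro h
    apply hf
    have h2 := congrArg (InnerProductSpace.toDual ℝ (EuclideanSpace ℝ (Fin n))) h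
    simpa [hv] using h2
  have hnv : ‖v‖ ≠ 0 := norm_ne_zero_iff.2 hv0
  refine ⟨‖v‖⁻¹ • v, ‖v‖⁻¹, ?_, inv_pos.2 (norm_pos_iff.2 hv0), fun w => ?_⟩
  · rw [norm_smul, Real.norm_eq_abs, abs_of_nonneg (inv_nonneg.2 (norm_nonneg v)),
      inv_mul_cancel₀ hnv]
  · rw [real_inner_smul_right]
    congr 1
    rw [real_inner_comm]
    exact InnerProductSpace.toDual_symm_apply

lemma upper_bound_from_interior {K : Set (EuclideanSpace ℝ (Fin n))} (hKconv : Convex ℝ K)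
    {x₀ : EuclideanSpace ℝ (Fin n)} (hx₀ : x₀ ∈ interior K)
    {f : EuclideanSpace ℝ (Fin n) →L[ℝ] ℝ} {u : ℝ}
    (hfu : ∀ a ∈ interior K, f a < u) : ∀ k ∈ K, f k ≤ u := by
  intro k hk
  by_contra hlt
  push_neg at hlt
  have hfx₀ : f x₀ < u := hfu _ hx₀
  have h1 : f x₀ < f k := lt_trans hfx₀ hlt
  have hden : 0 < f k - f x₀ := by linarith
  set t : ℝ := (u - f x₀) / (f k - f x₀) with ht
  have ht0 : 0 < t := div_pos (by linarith) hden
  have ht1 : t < 1 := (div_lt_one hden).2 (by linarith)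
  have hmem : (1 - t) • x₀ + t • k ∈ interior K :=
    hKconv.combo_interior_closure_mem_interior hx₀ (subset_closure hk)
      (by linarith) (le_of_lt ht0) (by ring)
  have h2 := hfu _ hmem
  rw [map_add, map_smul, map_smul, smul_eq_mul, smul_eq_mul] at h2
  have h3 : t * (f k - f x₀) = u - f x₀ := div_mul_cancel₀ _ (ne_of_gt hden)
  nlinarith

lemma exists_chord_ext {K : Set (EuclideanSpace ℝ (Fin n))} (hKc : IsCompact K)
    (hKconv : Convex ℝ K) (hKint : (interior K).Nonempty)
    {O : EuclideanSpace ℝ (Fin n)} (hO : O ∉ K) :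
    ∃ x ∈ K, ∃ z ∈ K, Collinear ℝ ({O, x, z} : Set (EuclideanSpace ℝ (Fin n))) ∧
      ∃ f : EuclideanSpace ℝ (Fin n) →L[ℝ] ℝ, f ≠ 0 ∧
        (∀ k ∈ K, f k ≤ f z) ∧ (∀ k ∈ K, f x ≤ f k) := by
  obtain ⟨x₀, hx₀⟩ := hKint
  have hne : K.Nonempty := ⟨x₀, interior_subset hx₀⟩
  have hKcl : IsClosed K := hKc.isClosed
  have hr : 0 < infDist O K := (hKcl.notMem_iff_infDist_pos hne).1 hO
  obtain ⟨R, hR⟩ := hKc.isBounded.subset_closedBall O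
  set S : Set ℝ := {t | 1 ≤ t ∧ ∃ k ∈ K, O + t • (k - O) ∈ K} with hS
  have hST : S ⊆ Set.Icc 1 (R / infDist O K) := by
    rintro t ⟨ht1, k, hk, hkt⟩
    refine ⟨ht1, ?_⟩
    have h1 : t * ‖k - O‖ ≤ R := by
      have h := hR hkt
      rw [Metric.mem_closedBall, dist_eq_norm, add_sub_cancel_left, norm_smul,
        Real.norm_eq_abs, abs_of_nonneg (by linarith : (0:ℝ) ≤ t)] at h
      exact h
    have h2 : infDist O K ≤ ‖k - O‖ := by
      have := Metric.infDist_le_dist_of_mem (x := O) hk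
      rwa [dist_eq_norm, norm_sub_rev] at this
    rw [le_div_iff₀ hr]
    calc t * infDist O K ≤ t * ‖k - O‖ := by
          exact mul_le_mul_of_nonneg_left h2 (by linarith)
      _ ≤ R := h1
  set T := R / infDist O K with hT
  set C : Set (ℝ × EuclideanSpace ℝ (Fin n)) :=
    {p | p.1 ∈ Set.Icc 1 T ∧ p.2 ∈ K ∧ O + p.1 • (p.2 - O) ∈ K} with hC
  have hCc : IsCompact C := by
    have h1 : IsCompact ((Set.Icc (1:ℝ) T) ×ˢ K) := isCompact_Icc.prod hKc
    have h2 : IsClosed {p : ℝ × EuclideanSpace ℝ (Fin n) | O + p.1 • (p.2 - O) ∈ K} :=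
      hKcl.preimage (by fun_prop)
    have h3 : C = ((Set.Icc (1:ℝ) T) ×ˢ K) ∩
        {p : ℝ × EuclideanSpace ℝ (Fin n) | O + p.1 • (p.2 - O) ∈ K} := by
      ext p; simp [hC, Set.mem_prod, and_assoc]
    rw [h3]
    exact h1.inter_right h2
  have hSC : S = Prod.fst '' C := by
    ext t
    constructor
    · rintro ⟨ht1, k, hk, hkt⟩
      exact ⟨(t, k), ⟨hST ⟨ht1, k, hk, hkt⟩, hk, hkt⟩, rfl⟩
    · rintro ⟨⟨t', k⟩, ⟨⟨h1, -⟩, hk, hkt⟩, rfl⟩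
      exact ⟨h1, k, hk, hkt⟩
  have hSne : S.Nonempty := ⟨1, le_refl 1, x₀, interior_subset hx₀, by simpa using interior_subset hx₀⟩
  have hScomp : IsCompact S := hSC ▸ hCc.image continuous_fst
  set t₀ := sSup S with ht₀
  have htS : t₀ ∈ S := hScomp.sSup_mem hSne
  obtain ⟨ht₀1, xs, hxs, hys⟩ := htS
  set z := O + t₀ • (xs - O) with hz
  have hmaxS : ∀ t ∈ S, t ≤ t₀ := fun t ht => le_csSup hScomp.bddAbove ht
  have hdisj : Disjoint (interior K) ((fun k => O + t₀ • (k - O)) '' K) := by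
    rw [Set.disjoint_left]
    rintro a ha ⟨w, hw, rfl⟩
    obtain ⟨ε, hε, hball⟩ := Metric.isOpen_iff.1 isOpen_interior _ ha
    set δ := ε / (2 * (‖w - O‖ + 1)) with hδ
    have hδpos : 0 < δ := by positivity
    have hmem : O + (t₀ + δ) • (w - O) ∈ ball (O + t₀ • (w - O)) ε := by
      rw [Metric.mem_ball, dist_eq_norm]
      have : O + (t₀ + δ) • (w - O) - (O + t₀ • (w - O)) = δ • (w - O) := by
        rw [add_smul]; abel
      rw [this, norm_smul, Real.norm_eq_abs, abs_of_pos hδpos, hδ]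
      rw [div_mul_eq_mul_div, div_lt_iff₀ (by positivity)]
      nlinarith [norm_nonneg (w - O), hε]
    have hin : t₀ + δ ∈ S := ⟨by linarith, w, hw, interior_subset (hball hmem)⟩
    linarith [hmaxS _ hin]
  have himconv : Convex ℝ ((fun k => O + t₀ • (k - O)) '' K) := by
    rintro _ ⟨p, hp, rfl⟩ _ ⟨q, hq, rfl⟩ a b ha hb hab
    refine ⟨a • p + b • q, hKconv hp hq ha hb hab, ?_⟩
    have : a • (O + t₀ • (p - O)) + b • (O + t₀ • (q - O)) =
        (a + b) • O + t₀ • ((a • p + b • q) - (a + b) • O) := by module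
    rw [this, hab, one_smul]
  obtain ⟨f, u, hfu, huf⟩ := geometric_hahn_banach_open (hKconv.interior) isOpen_interior
    himconv hdisj
  have hfK : ∀ k ∈ K, f k ≤ u := upper_bound_from_interior hKconv hx₀ hfu
  have hzK : z ∈ K := hys
  have huz : f z = u := le_antisymm (hfK z hzK) (huf z ⟨xs, hxs, rfl⟩)
  have ht₀pos : (0:ℝ) < t₀ := lt_of_lt_of_le one_pos ht₀1
  have hexp : ∀ w : EuclideanSpace ℝ (Fin n),
      f (O + t₀ • (w - O)) = f O + t₀ * (f w - f O) := by
    intro w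
    rw [map_add, map_smul, map_sub, smul_eq_mul]
  have hfmin : ∀ k ∈ K, f xs ≤ f k := by
    intro k hk
    have h1 : u ≤ f (O + t₀ • (k - O)) := huf _ ⟨k, hk, rfl⟩
    rw [hexp k] at h1
    have h2 : u = f O + t₀ * (f xs - f O) := by rw [← huz, hz, hexp xs]
    have h3 : t₀ * (f xs - f O) ≤ t₀ * (f k - f O) := by linarith
    have h4 := le_of_mul_le_mul_left h3 ht₀pos
    linarith
  have hf0 : f ≠ 0 := by
    intro h
    have h1 : (0:ℝ) < u := by simpa [h] using hfu x₀ hx₀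
    have h2 : u ≤ 0 := by simpa [h] using huf z ⟨xs, hxs, rfl⟩
    linarith
  have hcol : Collinear ℝ ({O, xs, z} : Set (EuclideanSpace ℝ (Fin n))) := by
    rw [collinear_iff_of_mem (Set.mem_insert O _)]
    refine ⟨xs - O, ?_⟩
    intro p hp
    simp only [Set.mem_insert_iff, Set.mem_singleton_iff] at hp
    rcases hp with rfl | rfl | rfl
    · exact ⟨0, by simp⟩
    · exact ⟨1, by simp⟩
    · exact ⟨t₀, by rw [hz]; simp [add_comm]⟩
  exact ⟨xs, hxs, z, hzK, hcol, f, hf0, fun k hk => (hfK k hk).trans huz.symm.le, hfmin⟩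

lemma exists_chord_int (hn : 0 < n) {K : Set (EuclideanSpace ℝ (Fin n))} (hKc : IsCompact K)
    (hKconv : Convex ℝ K) {O : EuclideanSpace ℝ (Fin n)} (hO : O ∈ interior K) :
    ∃ x ∈ K, ∃ z ∈ K, Collinear ℝ ({O, x, z} : Set (EuclideanSpace ℝ (Fin n))) ∧
      ∃ f : EuclideanSpace ℝ (Fin n) →L[ℝ] ℝ, f ≠ 0 ∧
        (∀ k ∈ K, f k ≤ f z) ∧ (∀ k ∈ K, f x ≤ f k) := by
  have hKcl : IsClosed K := hKc.isClosed
  obtain ⟨r, hrpos, hball⟩ : ∃ r > 0, ball O r ⊆ K := by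
    have := mem_interior_iff_mem_nhds.1 hO
    exact Metric.mem_nhds_iff.1 this
  obtain ⟨R, hR⟩ := hKc.isBounded.subset_closedBall O
  have hRnn : 0 ≤ R := by
    have := hR (interior_subset hO)
    simpa using this
  have hnormk : ∀ k ∈ K, ‖k - O‖ ≤ R := by
    intro k hk
    have := hR hk
    rwa [Metric.mem_closedBall, dist_eq_norm] at this
  -- a point of K at distance r/2 from O
  set e : EuclideanSpace ℝ (Fin n) := EuclideanSpace.single ⟨0, hn⟩ (1:ℝ) with he
  have hnorme : ‖e‖ = 1 := by simp [he]
  set k₁ : EuclideanSpace ℝ (Fin n) := O + (r/2) • e with hk₁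
  have hk₁K : k₁ ∈ K := by
    apply hball
    rw [Metric.mem_ball, dist_eq_norm, hk₁, add_sub_cancel_left, norm_smul,
      Real.norm_eq_abs, abs_of_pos (by linarith), hnorme]
    linarith
  have hk₁O : ‖k₁ - O‖ = r / 2 := by
    rw [hk₁, add_sub_cancel_left, norm_smul, Real.norm_eq_abs, abs_of_pos (by linarith), hnorme]
    ring
  set S : Set ℝ := {l | 0 ≤ l ∧ ∀ k ∈ K, O - l • (k - O) ∈ K} with hS
  have hScl : IsClosed S := by
    have h1 : S = Set.Ici (0:ℝ) ∩ ⋂ k ∈ K, {l : ℝ | O - l • (k - O) ∈ K} := by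
      ext l
      simp only [hS, Set.mem_setOf_eq, Set.mem_inter_iff, Set.mem_Ici, Set.mem_iInter]
    rw [h1]
    exact isClosed_Ici.inter (isClosed_biInter fun k _ => hKcl.preimage (by fun_prop))
  have hSbdd : BddAbove S := by
    refine ⟨R / (r/2), ?_⟩
    rintro l ⟨hl0, hl⟩
    have h1 := hl k₁ hk₁K
    have h2 : ‖O - l • (k₁ - O) - O‖ ≤ R := hnormk _ h1
    rw [sub_sub_cancel_left, norm_neg, norm_smul, Real.norm_eq_abs, abs_of_nonneg hl0,
      hk₁O] at h2
    have hrr : (0:ℝ) < r / 2 := by linarith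
    exact (le_div_iff₀ hrr).2 h2
  have hS0 : (0:ℝ) ∈ S := ⟨le_refl 0, fun k hk => by simpa using interior_subset hO⟩
  set l₀ := sSup S with hl₀
  have hlS : l₀ ∈ S := hScl.csSup_mem ⟨0, hS0⟩ hSbdd
  obtain ⟨hl₀0, hl₀K⟩ := hlS
  -- l₀ is positive
  have hlpos : 0 < l₀ := by
    have hmem : r / (2 * (R + 1)) ∈ S := by
      refine ⟨by positivity, fun k hk => ?_⟩
      apply hball
      rw [Metric.mem_ball, dist_eq_norm, sub_sub_cancel_left, norm_neg, norm_smul,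
        Real.norm_eq_abs, abs_of_pos (by positivity)]
      have h1 : ‖k - O‖ ≤ R := hnormk k hk
      have h2 : r / (2 * (R + 1)) * ‖k - O‖ ≤ r / (2 * (R + 1)) * R :=
        mul_le_mul_of_nonneg_left h1 (by positivity)
      have h3 : r / (2 * (R + 1)) * R < r := by
        rw [div_mul_eq_mul_div, div_lt_iff₀ (by positivity)]
        nlinarith
      linarith
    have := le_csSup hSbdd hmem
    have hpos : 0 < r / (2 * (R + 1)) := by positivity
    linarith
  -- touching point
  have htouch : ¬ ∀ k ∈ K, O - l₀ • (k - O) ∈ interior K := by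
    intro hall
    set g : EuclideanSpace ℝ (Fin n) → EuclideanSpace ℝ (Fin n) :=
      fun k => O - l₀ • (k - O) with hg
    have hgc : IsCompact (g '' K) := hKc.image (by fun_prop)
    have hsub : g '' K ⊆ interior K := by
      rintro _ ⟨k, hk, rfl⟩; exact hall k hk
    obtain ⟨δ, hδ, hδsub⟩ := hgc.exists_cthickening_subset_open isOpen_interior hsub
    set ε := δ / (R + 1) with hε
    have hεpos : 0 < ε := by positivity
    have hmem : l₀ + ε ∈ S := by
      refine ⟨by linarith, fun k hk => ?_⟩
      have h1 : O - (l₀ + ε) • (k - O) ∈ Metric.cthickening δ (g '' K) := by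
        refine Metric.mem_cthickening_of_dist_le _ (g k) δ (g '' K) ⟨k, hk, rfl⟩ ?_
        rw [hg, dist_eq_norm]
        have h2 : O - (l₀ + ε) • (k - O) - (O - l₀ • (k - O)) = -(ε • (k - O)) := by
          rw [add_smul]; abel
        rw [h2, norm_neg, norm_smul, Real.norm_eq_abs, abs_of_pos hεpos]
        have h3 : ‖k - O‖ ≤ R := hnormk k hk
        have h4 : ε * ‖k - O‖ ≤ ε * R := mul_le_mul_of_nonneg_left h3 (le_of_lt hεpos)
        have h5 : ε * R ≤ δ := by
          rw [hε, div_mul_eq_mul_div, div_le_iff₀ (by positivity)]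
          nlinarith
        linarith
      exact interior_subset (hδsub h1)
    have := le_csSup hSbdd hmem
    linarith
  push_neg at htouch
  obtain ⟨xs, hxs, hznot⟩ := htouch
  set z := O - l₀ • (xs - O) with hz
  have hzK : z ∈ K := hl₀K xs hxs
  obtain ⟨f, hfu⟩ := geometric_hahn_banach_open_point (hKconv.interior) isOpen_interior hznot
  have hfK : ∀ k ∈ K, f k ≤ f z := upper_bound_from_interior hKconv hO hfu
  have hf0 : f ≠ 0 := by
    intro h
    have := hfu O hO
    simp [h] at this
  have hexp : ∀ w : EuclideanSpace ℝ (Fin n),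
      f (O - l₀ • (w - O)) = f O - l₀ * (f w - f O) := by
    intro w
    rw [map_sub, map_smul, map_sub, smul_eq_mul]
  have hfmin : ∀ k ∈ K, f xs ≤ f k := by
    intro k hk
    have h1 : f (O - l₀ • (k - O)) ≤ f z := hfK _ (hl₀K k hk)
    rw [hexp k, hz, hexp xs] at h1
    have h3 : l₀ * (f xs - f O) ≤ l₀ * (f k - f O) := by linarith
    have h4 := le_of_mul_le_mul_left h3 hlpos
    linarith
  have hcol : Collinear ℝ ({O, xs, z} : Set (EuclideanSpace ℝ (Fin n))) := by
    rw [collinear_iff_of_mem (Set.mem_insert O _)]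
    refine ⟨xs - O, ?_⟩
    intro p hp
    simp only [Set.mem_insert_iff, Set.mem_singleton_iff] at hp
    rcases hp with rfl | rfl | rfl
    · exact ⟨0, by simp⟩
    · exact ⟨1, by simp⟩
    · refine ⟨-l₀, ?_⟩
      rw [hz]
      simp only [vadd_eq_add, neg_smul]
      abel
  exact ⟨xs, hxs, z, hzK, hcol, f, hf0, hfK, hfmin⟩

lemma width_le_eFn (hn : 0 < n) {K : Set (EuclideanSpace ℝ (Fin n))} (hKc : IsCompact K)
    (hKconv : Convex ℝ K) (hKint : (interior K).Nonempty) (O : EuclideanSpace ℝ (Fin n)) :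
    (⨅ u : sphere (0 : EuclideanSpace ℝ (Fin n)) 1, widthFn K ↑u) ≤ eFn K O := by
  obtain ⟨x₀, hx₀⟩ := hKint
  have hne : K.Nonempty := ⟨x₀, interior_subset hx₀⟩
  have hbdd : BddBelow (Set.range fun u : sphere (0 : EuclideanSpace ℝ (Fin n)) 1 =>
      widthFn K ↑u) := by
    refine ⟨0, ?_⟩
    rintro _ ⟨u, rfl⟩
    exact widthFn_nonneg hKc hne _
  have hWle : ∀ u : EuclideanSpace ℝ (Fin n), ‖u‖ = 1 →
      (⨅ u : sphere (0 : EuclideanSpace ℝ (Fin n)) 1, widthFn K ↑u) ≤ widthFn K u := by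
    intro u hu
    exact ciInf_le hbdd (⟨u, mem_sphere_zero_iff_norm.2 hu⟩ :
      sphere (0 : EuclideanSpace ℝ (Fin n)) 1)
  by_cases hOint : O ∈ interior K
  · obtain ⟨x, hx, z, hz, hcol, f, hf0, hmaxf, hminf⟩ := exists_chord_int hn hKc hKconv hOint
    obtain ⟨u, c, hu1, hc, hcu⟩ := exists_unit_dual hf0
    have hmax : ∀ k ∈ K, ⟪k, u⟫ ≤ ⟪z, u⟫ := fun k hk => by
      rw [hcu, hcu]; exact mul_le_mul_of_nonneg_left (hmaxf k hk) hc.le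
    have hmin : ∀ k ∈ K, ⟪x, u⟫ ≤ ⟪k, u⟫ := fun k hk => by
      rw [hcu, hcu]; exact mul_le_mul_of_nonneg_left (hminf k hk) hc.le
    have hwidth := widthFn_eq_of_support hKc hx hz hmax hmin
    have h1 : widthFn K u ≤ dist x z := by
      rw [hwidth, ← inner_sub_left]
      calc ⟪z - x, u⟫ ≤ |⟪z - x, u⟫| := le_abs_self _
        _ ≤ ‖z - x‖ * ‖u‖ := abs_real_inner_le_norm _ _
        _ = dist x z := by rw [hu1, mul_one, dist_eq_norm, norm_sub_rev]
    exact (hWle u hu1).trans (h1.trans (le_eFn hKc hx hz hcol))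
  · have key : ∀ θ : ℝ, 0 < θ → θ < 1 →
        θ * (⨅ u : sphere (0 : EuclideanSpace ℝ (Fin n)) 1, widthFn K ↑u) ≤ eFn K O := by
      intro θ hθ0 hθ1
      set φ : EuclideanSpace ℝ (Fin n) → EuclideanSpace ℝ (Fin n) :=
        fun k => x₀ + θ • (k - x₀) with hφ
      set K' := φ '' K with hK'
      have hK'c : IsCompact K' := hKc.image (by fun_prop)
      have hK'conv : Convex ℝ K' := by
        rintro _ ⟨p, hp, rfl⟩ _ ⟨q, hq, rfl⟩ a b ha hb hab
        refine ⟨a • p + b • q, hKconv hp hq ha hb hab, ?_⟩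
        show φ (a • p + b • q) = a • φ p + b • φ q
        simp only [hφ]
        have hmod : a • (x₀ + θ • (p - x₀)) + b • (x₀ + θ • (q - x₀)) =
            (a + b) • x₀ + θ • ((a • p + b • q) - (a + b) • x₀) := by module
        rw [hmod, hab, one_smul]
      have hK'sub : K' ⊆ interior K := by
        rintro _ ⟨k, hk, rfl⟩
        have hcombo : φ k = (1 - θ) • x₀ + θ • k := by simp only [hφ]; module
        rw [hcombo]
        exact hKconv.combo_interior_closure_mem_interior hx₀ (subset_closure hk)
          (by linarith) hθ0.le (by ring)
      have hK'int : (interior K').Nonempty := by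
        obtain ⟨r, hrpos, hball⟩ := Metric.mem_nhds_iff.1 (mem_interior_iff_mem_nhds.1 hx₀)
        refine ⟨x₀, ?_⟩
        rw [mem_interior]
        refine ⟨ball x₀ (θ * r), ?_, isOpen_ball, mem_ball_self (by positivity)⟩
        intro y hy
        refine ⟨x₀ + θ⁻¹ • (y - x₀), hball ?_, ?_⟩
        · rw [Metric.mem_ball, dist_eq_norm, add_sub_cancel_left, norm_smul, Real.norm_eq_abs,
            abs_of_pos (inv_pos.2 hθ0)]
          rw [Metric.mem_ball, dist_eq_norm] at hy
          rw [inv_mul_lt_iff₀ hθ0]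
          exact hy
        · show φ (x₀ + θ⁻¹ • (y - x₀)) = y
          simp only [hφ, add_sub_cancel_left, smul_smul, mul_inv_cancel₀ (ne_of_gt hθ0),
            one_smul]
          abel
      have hO' : O ∉ K' := fun h => hOint (hK'sub h)
      obtain ⟨x', hx', z', hz', hcol, f, hf0, hmaxf, hminf⟩ :=
        exists_chord_ext hK'c hK'conv hK'int hO'
      have hx'K : x' ∈ K := interior_subset (hK'sub hx')
      have hz'K : z' ∈ K := interior_subset (hK'sub hz')
      obtain ⟨u, c, hu1, hc, hcu⟩ := exists_unit_dual hf0
      obtain ⟨xk, hxk, hxk'⟩ := hx'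
      obtain ⟨zk, hzk, hzk'⟩ := hz'
      have hfφ : ∀ w, f (φ w) = f x₀ + θ * (f w - f x₀) := by
        intro w; simp only [hφ]; rw [map_add, map_smul, map_sub, smul_eq_mul]
      have hmaxK : ∀ k ∈ K, ⟪k, u⟫ ≤ ⟪zk, u⟫ := by
        intro k hk
        have h1 := hmaxf (φ k) ⟨k, hk, rfl⟩
        rw [← hzk', hfφ, hfφ] at h1
        have h2 : f k ≤ f zk := by nlinarith
        rw [hcu, hcu]; exact mul_le_mul_of_nonneg_left h2 hc.le
      have hminK : ∀ k ∈ K, ⟪xk, u⟫ ≤ ⟪k, u⟫ := by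
        intro k hk
        have h1 := hminf (φ k) ⟨k, hk, rfl⟩
        rw [← hxk', hfφ, hfφ] at h1
        have h2 : f xk ≤ f k := by nlinarith
        rw [hcu, hcu]; exact mul_le_mul_of_nonneg_left h2 hc.le
      have hwidth := widthFn_eq_of_support hKc hxk hzk hmaxK hminK
      have hdiff : z' - x' = θ • (zk - xk) := by
        rw [← hzk', ← hxk']; simp only [hφ]; module
      have h1 : θ * widthFn K u ≤ dist x' z' := by
        rw [hwidth]
        calc θ * (⟪zk, u⟫ - ⟪xk, u⟫) = ⟪z' - x', u⟫ := by
              rw [hdiff, real_inner_smul_left, inner_sub_left]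
          _ ≤ |⟪z' - x', u⟫| := le_abs_self _
          _ ≤ ‖z' - x'‖ * ‖u‖ := abs_real_inner_le_norm _ _
          _ = dist x' z' := by rw [hu1, mul_one, dist_eq_norm, norm_sub_rev]
      have h2 : dist x' z' ≤ eFn K O := le_eFn hKc hx'K hz'K hcol
      calc θ * (⨅ u : sphere (0 : EuclideanSpace ℝ (Fin n)) 1, widthFn K ↑u)
          ≤ θ * widthFn K u := mul_le_mul_of_nonneg_left (hWle u hu1) hθ0.le
        _ ≤ dist x' z' := h1
        _ ≤ eFn K O := h2
    by_contra hcon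
    push_neg at hcon
    have hW0 : 0 < (⨅ u : sphere (0 : EuclideanSpace ℝ (Fin n)) 1, widthFn K ↑u) :=
      lt_of_le_of_lt (eFn_nonneg hKc hne O) hcon
    set W := ⨅ u : sphere (0 : EuclideanSpace ℝ (Fin n)) 1, widthFn K ↑u with hWdef
    have hE0 : 0 ≤ eFn K O := eFn_nonneg hKc hne O
    set θ := (eFn K O + W) / (2 * W) with hθdef
    have hθ0 : 0 < θ := div_pos (by linarith) (by linarith)
    have hθ1 : θ < 1 := by
      rw [hθdef, div_lt_one (by linarith)]
      linarith
    have hk := key θ hθ0 hθ1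
    have hθW : θ * W = (eFn K O + W) / 2 := by
      rw [hθdef]
      field_simp
    rw [hθW] at hk
    linarith

lemma eFn_far {K : Set (EuclideanSpace ℝ (Fin n))} (hKc : IsCompact K) (hne : K.Nonempty)
    {v : EuclideanSpace ℝ (Fin n)} (hv : ‖v‖ = 1) {D R : ℝ}
    (hD : K ⊆ closedBall 0 D) (hR : D < R) :
    eFn K (R • v) ≤ widthFn K v * ((R + D) / (R - D)) := by
  have hD0 : 0 ≤ D := by
    obtain ⟨k, hk⟩ := hne
    have h := hD hk
    rw [Metric.mem_closedBall] at h
    linarith [dist_nonneg (x := k) (y := (0 : EuclideanSpace ℝ (Fin n)))]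
  have hRD : 0 < R - D := by linarith
  have hR0 : 0 < R := by linarith
  have hwnn : 0 ≤ widthFn K v := widthFn_nonneg hKc hne v
  have hfrac : 0 ≤ (R + D) / (R - D) := by positivity
  obtain ⟨k₀, hk₀⟩ := hne
  refine csSup_le ⟨0, k₀, hk₀, k₀, hk₀, collinear_self_pair _ k₀, (dist_self k₀).symm⟩ ?_
  rintro d ⟨x, hx, y, hy, hcol, rfl⟩
  have hxmem : x ∈ ({R • v, x, y} : Set (EuclideanSpace ℝ (Fin n))) := by simp
  rw [collinear_iff_of_mem hxmem] at hcol
  obtain ⟨w, hw⟩ := hcol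
  obtain ⟨a, ha⟩ := hw y (by simp)
  obtain ⟨b, hb⟩ := hw (R • v) (by simp)
  simp only [vadd_eq_add] at ha hb
  have hxD : ‖x‖ ≤ D := by
    have h := hD hx; rwa [Metric.mem_closedBall, dist_zero_right] at h
  have hbw : b • w = R • v - x := by rw [hb]; abel
  have haw : y - x = a • w := by rw [ha]; abel
  have hinner1 : R - D ≤ ⟪R • v - x, v⟫ := by
    rw [inner_sub_left, real_inner_smul_left, real_inner_self_eq_norm_mul_norm, hv]
    have h1 : ⟪x, v⟫ ≤ D := by
      calc ⟪x, v⟫ ≤ |⟪x, v⟫| := le_abs_self _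
        _ ≤ ‖x‖ * ‖v‖ := abs_real_inner_le_norm _ _
        _ ≤ D := by rw [hv, mul_one]; exact hxD
    nlinarith
  have hnorm1 : ‖R • v - x‖ ≤ R + D := by
    calc ‖R • v - x‖ ≤ ‖R • v‖ + ‖x‖ := norm_sub_le _ _
      _ ≤ R + D := by
          rw [norm_smul, Real.norm_eq_abs, hv, mul_one, abs_of_pos hR0]
          linarith
  have hbc : R - D ≤ b * ⟪w, v⟫ := by
    rw [← real_inner_smul_left, hbw]; exact hinner1
  have hbn : |b| * ‖w‖ ≤ R + D := by
    rw [← Real.norm_eq_abs, ← norm_smul, hbw]; exact hnorm1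
  have hdist : dist x y = |a| * ‖w‖ := by
    rw [dist_eq_norm, norm_sub_rev, haw, norm_smul, Real.norm_eq_abs]
  have habs : |a| * |⟪w, v⟫| ≤ widthFn K v := by
    have h := abs_inner_sub_le_width hKc hx hy v
    rwa [haw, real_inner_smul_left, abs_mul] at h
  have h5 : R - D ≤ |b| * |⟪w, v⟫| := by
    calc R - D ≤ b * ⟪w, v⟫ := hbc
      _ ≤ |b * ⟪w, v⟫| := le_abs_self _
      _ = |b| * |⟪w, v⟫| := abs_mul _ _
  rw [hdist, ← mul_div_assoc, le_div_iff₀ hRD]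
  nlinarith [mul_le_mul habs hbn (by positivity) hwnn,
    mul_le_mul_of_nonneg_left h5 (mul_nonneg (abs_nonneg a) (norm_nonneg w)),
    abs_nonneg a, norm_nonneg w, abs_nonneg b, abs_nonneg (⟪w, v⟫ : ℝ)]

end ThicknessAux

theorem thickness_eq_inf_eFn {n : ℕ} (hn : 2 ≤ n) (K : Set (EuclideanSpace ℝ (Fin n)))
    (hKc : IsCompact K) (hKconv : Convex ℝ K) (hKint : (interior K).Nonempty) :
    (⨅ u : sphere (0 : EuclideanSpace ℝ (Fin n)) 1, widthFn K u) =
      (⨅ O : EuclideanSpace ℝ (Fin n), eFn K O) ∧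
    (⨅ u : sphere (0 : EuclideanSpace ℝ (Fin n)) 1, widthFn K u) =
      Filter.liminf (eFn K) (Filter.cocompact (EuclideanSpace ℝ (Fin n))) := by
  classical
  have hn0 : 0 < n := by omega
  haveI : Nontrivial (EuclideanSpace ℝ (Fin n)) := by
    refine ⟨⟨EuclideanSpace.single ⟨0, hn0⟩ (1:ℝ), 0, ?_⟩⟩
    intro h
    have h2 := congrArg (fun w : EuclideanSpace ℝ (Fin n) => ‖w‖) h
    simp [EuclideanSpace.norm_single] at h2
  haveI : Nonempty (sphere (0 : EuclideanSpace ℝ (Fin n)) 1) := by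
    refine ⟨⟨EuclideanSpace.single ⟨0, hn0⟩ (1:ℝ), ?_⟩⟩
    rw [mem_sphere_zero_iff_norm, EuclideanSpace.norm_single]
    simp
  obtain ⟨x₀, hx₀⟩ := hKint
  have hKint' : (interior K).Nonempty := ⟨x₀, hx₀⟩
  have hne : K.Nonempty := ⟨x₀, interior_subset hx₀⟩
  have hA : ∀ O, (⨅ u : sphere (0 : EuclideanSpace ℝ (Fin n)) 1, widthFn K ↑u) ≤ eFn K O :=
    fun O => ThicknessAux.width_le_eFn hn0 hKc hKconv hKint' O
  obtain ⟨D, hD⟩ := hKc.isBounded.subset_closedBall 0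
  have hD0 : 0 ≤ D := by
    obtain ⟨k, hk⟩ := hne
    have h := hD hk
    rw [Metric.mem_closedBall] at h
    linarith [dist_nonneg (x := k) (y := (0 : EuclideanSpace ℝ (Fin n)))]
  have hBnd : ∀ (v : EuclideanSpace ℝ (Fin n)), ‖v‖ = 1 → ∀ ε : ℝ, 0 < ε → ∀ R : ℝ,
      D + 1 + 2 * D * (widthFn K v + 1) / ε ≤ R → eFn K (R • v) ≤ widthFn K v + ε := by
    intro v hv ε hε R hRge
    have hwnn : 0 ≤ widthFn K v := ThicknessAux.widthFn_nonneg hKc hne v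
    have hQ0 : 0 ≤ 2 * D * (widthFn K v + 1) / ε := by positivity
    have hRD : D < R := by linarith
    have h1 := ThicknessAux.eFn_far hKc hne hv hD hRD
    have h2 : widthFn K v * ((R + D) / (R - D)) ≤ widthFn K v + ε := by
      rw [← mul_div_assoc, div_le_iff₀ (by linarith : (0:ℝ) < R - D)]
      have hQ : ε * (2 * D * (widthFn K v + 1) / ε) = 2 * D * (widthFn K v + 1) := by
        field_simp
      have h3 : ε * (D + 1 + 2 * D * (widthFn K v + 1) / ε) ≤ ε * R :=
        mul_le_mul_of_nonneg_left hRge hε.le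
      nlinarith
    exact h1.trans h2
  have hbddE : BddBelow (Set.range (eFn K)) := by
    refine ⟨0, ?_⟩
    rintro _ ⟨O, rfl⟩
    exact ThicknessAux.eFn_nonneg hKc hne O
  constructor
  · apply le_antisymm
    · exact le_ciInf hA
    · apply le_ciInf
      intro u
      have hu : ‖(u : EuclideanSpace ℝ (Fin n))‖ = 1 := mem_sphere_zero_iff_norm.1 u.2
      apply le_of_forall_pos_le_add
      intro ε hε
      calc (⨅ O : EuclideanSpace ℝ (Fin n), eFn K O)
          ≤ eFn K ((D + 1 + 2 * D * (widthFn K ↑u + 1) / ε) • (u : EuclideanSpace ℝ (Fin n))) :=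
            ciInf_le hbddE _
        _ ≤ widthFn K ↑u + ε := hBnd ↑u hu ε hε _ (le_refl _)
  · apply le_antisymm
    · apply Filter.le_liminf_of_le
      · exact Filter.IsBoundedUnder.isCoboundedUnder_ge
          (Filter.isBoundedUnder_of ⟨Metric.diam K, fun O =>
            ThicknessAux.eFn_le_diam hKc hne O⟩)
      · exact Filter.Eventually.of_forall hA
    · apply le_ciInf
      intro u
      have hu : ‖(u : EuclideanSpace ℝ (Fin n))‖ = 1 := mem_sphere_zero_iff_norm.1 u.2
      apply le_of_forall_pos_le_add
      intro ε hε
      set R₀ : ℝ := D + 1 + 2 * D * (widthFn K ↑u + 1) / ε with hR₀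
      have hQ0 : 0 ≤ 2 * D * (widthFn K ↑u + 1) / ε := by
        have hwnn : 0 ≤ widthFn K (↑u : EuclideanSpace ℝ (Fin n)) :=
          ThicknessAux.widthFn_nonneg hKc hne _
        positivity
      have hR₀D : D + 1 ≤ R₀ := by rw [hR₀]; linarith
      set m : ℕ → EuclideanSpace ℝ (Fin n) :=
        fun j => (R₀ + j) • (u : EuclideanSpace ℝ (Fin n)) with hm
      have hnormm : ∀ j : ℕ, ‖m j‖ = R₀ + j := by
        intro j
        rw [hm, norm_smul, Real.norm_eq_abs, hu, mul_one, abs_of_pos]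
        have : (0:ℝ) ≤ (j:ℝ) := Nat.cast_nonneg j
        linarith
      have hmt : Tendsto m atTop (cocompact (EuclideanSpace ℝ (Fin n))) := by
        rw [← Metric.cobounded_eq_cocompact]
        apply tendsto_norm_atTop_iff_cobounded.1
        have h1 : Tendsto (fun j : ℕ => R₀ + (j:ℝ)) atTop atTop :=
          tendsto_atTop_add_const_left atTop R₀ tendsto_natCast_atTop_atTop
        exact h1.congr fun j => (hnormm j).symm
      have hle1 : liminf (eFn K) (cocompact (EuclideanSpace ℝ (Fin n))) ≤
          liminf (eFn K ∘ m) atTop := by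
        rw [Filter.liminf_comp]
        haveI : (Filter.map m atTop).NeBot := Filter.NeBot.map atTop_neBot m
        have hb1 : IsBoundedUnder (fun x1 x2 => x1 ≥ x2)
            (cocompact (EuclideanSpace ℝ (Fin n))) (eFn K) :=
          Filter.isBoundedUnder_of ⟨0, fun O => ThicknessAux.eFn_nonneg hKc hne O⟩
        have hb2 : IsCoboundedUnder (fun x1 x2 => x1 ≥ x2) (map m atTop) (eFn K) :=
          Filter.IsBoundedUnder.isCoboundedUnder_ge
            (Filter.isBoundedUnder_of ⟨Metric.diam K, fun O =>
              ThicknessAux.eFn_le_diam hKc hne O⟩)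
        exact Filter.liminf_le_liminf_of_le hmt hb1 hb2
      have hle2 : liminf (eFn K ∘ m) atTop ≤ widthFn K ↑u + ε := by
        have hfb : IsBoundedUnder (fun x1 x2 => x1 ≥ x2) atTop (eFn K ∘ m) :=
          Filter.isBoundedUnder_of ⟨0, fun j => ThicknessAux.eFn_nonneg hKc hne (m j)⟩
        apply Filter.liminf_le_of_frequently_le ?_ hfb
        apply Filter.Eventually.frequently
        apply Filter.Eventually.of_forall
        intro j
        show eFn K (m j) ≤ widthFn K ↑u + ε
        rw [hm]
        apply hBnd ↑u hu ε hε
        have : (0:ℝ) ≤ (j:ℝ) := Nat.cast_nonneg j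
        rw [hR₀]
        linarith
      exact hle1.trans hle2
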